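/- Let G be a finite multigraph, let 𝒴 and 𝒵 denote the sets of components of the subgraph induced by the even-degree vertices of G having odd order and even order respectively. Suppose there exists a partition ℛ ∪ ℬ of the components of the subgraph induced by the odd-degree vertices of G such that, with R and B the unions of the vertex sets of components in ℛ and ℬ, e_G(R, Y) and e_G(B, Y) are both odd for every Y ∈ 𝒴, and e_G(R, Z) and e_G(B, Z) are both even for every Z ∈ 𝒵. Then G can be decomposed into two odd subgraphs. -/

import Mathlib

open scoped symmDiff
set_option linter.unusedSectionVars false


open Finset
open scoped Classical

/-- A multigraph on vertex type `V` with edge index type `E`: each edge `e` has two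
distinct endpoints given as an unordered pair `ends e` (no loops, multiple edges allowed). -/
structure Multigraph (V : Type) (E : Type) where
  ends : E → Sym2 V
  no_loops : ∀ e, ¬ (ends e).IsDiag

namespace Multigraph

variable {V E : Type} [Fintype V] [Fintype E]

/-- The number of edges from the edge set `F` incident with `v`. -/
noncomputable def degIn (G : Multigraph V E) (F : Finset E) (v : V) : ℕ :=
  (F.filter (fun e => v ∈ G.ends e)).card

/-- The degree of `v` in `G`. -/
noncomputable def deg (G : Multigraph V E) (v : V) : ℕ := G.degIn Finset.univ v

/-- The underlying simple graph of `G`. -/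
def simple (G : Multigraph V E) : SimpleGraph V where
  Adj x y := x ≠ y ∧ ∃ e : E, G.ends e = s(x, y)
  symm := ⟨by
    rintro x y ⟨hxy, e, he⟩
    exact ⟨hxy.symm, e, by rw [he, Sym2.eq_swap]⟩⟩
  loopless := ⟨fun x h => h.1 rfl⟩

/-- `C` is the vertex set of a connected component of the subgraph of `G` induced by `S`. -/
def IsComponentOf (G : Multigraph V E) (S : Set V) (C : Finset V) : Prop :=
  ∃ v ∈ S, ∀ x : V, x ∈ C ↔
    Relation.ReflTransGen (fun a b => a ∈ S ∧ b ∈ S ∧ (G.simple).Adj a b) v x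

/-- The number of edges of `G` with one endpoint in `U₁` and the other in `U₂`. -/
noncomputable def eBetween (G : Multigraph V E) (U₁ U₂ : Finset V) : ℕ :=
  (Finset.univ.filter (fun e : E => ∃ x ∈ U₁, ∃ y ∈ U₂, G.ends e = s(x, y))).card

/-- The set of vertices of `G` of odd degree. -/
noncomputable def oddVerts (G : Multigraph V E) : Finset V :=
  Finset.univ.filter (fun v => Odd (G.deg v))

/-- The set of vertices of `G` of even degree. -/
noncomputable def evenVerts (G : Multigraph V E) : Finset V :=
  Finset.univ.filter (fun v => Even (G.deg v))

/-- `F` forms an odd subgraph: every vertex incident with an edge of `F` has odd `F`-degree. -/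
def IsOddSet (G : Multigraph V E) (F : Finset E) : Prop :=
  ∀ v : V, (∃ e ∈ F, v ∈ G.ends e) → Odd (G.degIn F v)

/-- `F` forms an even subgraph: every vertex has even `F`-degree. -/
def IsEvenSet (G : Multigraph V E) (F : Finset E) : Prop :=
  ∀ v : V, Even (G.degIn F v)

end Multigraph

section Aux
open Multigraph

variable {V E : Type} [Fintype V] [Fintype E] (G : Multigraph V E)

lemma degIn_union (F₁ F₂ : Finset E) (h : Disjoint F₁ F₂) (v : V) :
    G.degIn (F₁ ∪ F₂) v = G.degIn F₁ v + G.degIn F₂ v := by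
  unfold Multigraph.degIn
  rw [Finset.filter_union]
  exact Finset.card_union_of_disjoint (Finset.disjoint_filter_filter h)

lemma degIn_add_compl (F : Finset E) (v : V) :
    G.degIn F v + G.degIn Fᶜ v = G.deg v := by
  rw [Multigraph.deg, ← degIn_union G F Fᶜ disjoint_compl_right, Finset.union_compl]

lemma degIn_symmDiff (F₁ F₂ : Finset E) (v : V) :
    (G.degIn (F₁ ∆ F₂) v : ZMod 2) = G.degIn F₁ v + G.degIn F₂ v := by
  have h1 : G.degIn (F₁ ∪ F₂) v + G.degIn (F₁ ∩ F₂) v = G.degIn F₁ v + G.degIn F₂ v := by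
    unfold Multigraph.degIn
    rw [Finset.filter_union, Finset.filter_inter_distrib]
    exact Finset.card_union_add_card_inter _ _
  have h2 : G.degIn (F₁ ∆ F₂) v + G.degIn (F₁ ∩ F₂) v = G.degIn (F₁ ∪ F₂) v := by
    have hd : Disjoint (F₁ ∆ F₂) (F₁ ∩ F₂) := disjoint_symmDiff_inf F₁ F₂
    have hu : (F₁ ∆ F₂) ∪ (F₁ ∩ F₂) = F₁ ∪ F₂ := symmDiff_sup_inf F₁ F₂
    rw [← hu, degIn_union G _ _ hd]
  have h3 : G.degIn (F₁ ∆ F₂) v + (G.degIn (F₁ ∩ F₂) v + G.degIn (F₁ ∩ F₂) v)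
      = G.degIn F₁ v + G.degIn F₂ v := by omega
  have := congrArg (fun n : ℕ => (n : ZMod 2)) h3
  push_cast at this
  rwa [CharTwo.add_self_eq_zero, add_zero] at this

end Aux
section Aux2
open Multigraph

variable {V E : Type} [Fintype V] [Fintype E] (G : Multigraph V E)

lemma degIn_singleton (e : E) (x : V) :
    G.degIn {e} x = if x ∈ G.ends e then 1 else 0 := by
  classical
  unfold Multigraph.degIn
  rw [Finset.filter_singleton]
  split_ifs <;> simp

lemma path_join {S : Set V} {u w : V}
    (h : Relation.ReflTransGen (fun a b => a ∈ S ∧ b ∈ S ∧ (G.simple).Adj a b) u w) :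
    ∃ F : Finset E, (∀ e ∈ F, ∀ x ∈ G.ends e, x ∈ S) ∧
      ∀ x : V, (G.degIn F x : ZMod 2) =
        (if x = u then 1 else 0) + (if x = w then 1 else 0) := by
  classical
  induction h with
  | refl =>
    refine ⟨∅, by simp, fun x => ?_⟩
    have : G.degIn (∅ : Finset E) x = 0 := by simp [Multigraph.degIn]
    rw [this]
    by_cases hx : x = u <;> simp [hx] <;> decide
  | @tail b c hub hbc ih =>
    obtain ⟨F, hFS, hFdeg⟩ := ih
    obtain ⟨hbS, hcS, hbc'⟩ := hbc
    obtain ⟨hne, e, he⟩ : b ≠ c ∧ ∃ e : E, G.ends e = s(b, c) := hbc'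
    refine ⟨F ∆ {e}, ?_, ?_⟩
    · intro e' he' x hx
      rcases Finset.mem_symmDiff.1 he' with ⟨h1, _⟩ | ⟨h1, _⟩
      · exact hFS e' h1 x hx
      · have : e' = e := Finset.mem_singleton.1 h1
        subst this
        rw [he] at hx
        rcases Sym2.mem_iff.1 hx with rfl | rfl
        · exact hbS
        · exact hcS
    · intro x
      rw [degIn_symmDiff, hFdeg, degIn_singleton, he]
      simp only [Sym2.mem_iff]
      have key : ∀ a : ZMod 2, a + 1 + 1 = a := by decide
      by_cases hxb : x = b <;> by_cases hxc : x = c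
      · exact absurd (hxb.symm.trans hxc) hne
      all_goals simp [hxb, hxc, hne, hne.symm] <;> try exact key _

end Aux2
section Aux3
open Multigraph

variable {V E : Type} [Fintype V] [Fintype E] (G : Multigraph V E)

lemma tjoin {S : Set V} (n : ℕ) :
    ∀ T : Finset V, T.card = n → (∀ v ∈ T, v ∈ S) →
    (∀ v ∈ T, Even ((T.filter (fun x => Relation.ReflTransGen
        (fun a b => a ∈ S ∧ b ∈ S ∧ (G.simple).Adj a b) v x)).card)) →
    ∃ F : Finset E, (∀ e ∈ F, ∀ x ∈ G.ends e, x ∈ S) ∧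
      ∀ x : V, (G.degIn F x : ZMod 2) = if x ∈ T then 1 else 0 := by
  classical
  induction n using Nat.strong_induction_on with
  | _ n ih =>
    intro T hcard hTS hinv
    rcases Finset.eq_empty_or_nonempty T with rfl | ⟨u, hu⟩
    · exact ⟨∅, by simp, fun x => by simp [Multigraph.degIn]⟩
    · have hrsymm : Symmetric (fun a b => a ∈ S ∧ b ∈ S ∧ (G.simple).Adj a b) :=
        fun a b ⟨h1, h2, h3⟩ => ⟨h2, h1, h3.symm⟩
      set r := fun a b => a ∈ S ∧ b ∈ S ∧ (G.simple).Adj a b with hr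
      set C := T.filter (fun x => Relation.ReflTransGen r u x) with hC
      have huC : u ∈ C := Finset.mem_filter.2 ⟨hu, Relation.ReflTransGen.refl⟩
      have hCeven : Even C.card := hinv u hu
      have h1lt : 1 < C.card := by
        rcases hCeven with ⟨k, hk⟩
        have : 0 < C.card := Finset.card_pos.2 ⟨u, huC⟩
        omega
      obtain ⟨w, hwC, hwu⟩ : ∃ w ∈ C, w ≠ u := by
        obtain ⟨a, ha, b, hb, hab⟩ := Finset.one_lt_card.1 h1lt
        by_cases hau : a = u
        · exact ⟨b, hb, fun h => hab (hau.trans h.symm)⟩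
        · exact ⟨a, ha, hau⟩
      have hwT : w ∈ T := (Finset.mem_filter.1 hwC).1
      have hpathw : Relation.ReflTransGen r u w := (Finset.mem_filter.1 hwC).2
      obtain ⟨F₁, hF₁S, hF₁deg⟩ := path_join G hpathw
      set T' := (T.erase u).erase w with hT'
      have hmemT' : ∀ x, x ∈ T' ↔ x ≠ w ∧ x ≠ u ∧ x ∈ T := by
        intro x; simp [hT', Finset.mem_erase, and_assoc]
      have hT'card : T'.card = n - 2 := by
        rw [hT', Finset.card_erase_of_mem (Finset.mem_erase.2 ⟨hwu, hwT⟩),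
          Finset.card_erase_of_mem hu, hcard]
        omega
      have hn2 : 2 ≤ n := by
        have : C.card ≤ T.card := Finset.card_filter_le _ _
        omega
      have hT'inv : ∀ v ∈ T', Even ((T'.filter (fun x =>
          Relation.ReflTransGen r v x)).card) := by
        intro v hv
        have hvT : v ∈ T := ((hmemT' v).1 hv).2.2
        by_cases hvu : Relation.ReflTransGen r v u
        · have hvw : Relation.ReflTransGen r v w := hvu.trans hpathw
          have hfe : T'.filter (fun x => Relation.ReflTransGen r v x) =
              ((T.filter (fun x => Relation.ReflTransGen r v x)).erase u).erase w := by
            ext x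
            simp only [Finset.mem_filter, Finset.mem_erase, hmemT' x]
            tauto
          have huf : u ∈ T.filter (fun x => Relation.ReflTransGen r v x) :=
            Finset.mem_filter.2 ⟨hu, hvu⟩
          have hwf : w ∈ (T.filter (fun x => Relation.ReflTransGen r v x)).erase u :=
            Finset.mem_erase.2 ⟨hwu, Finset.mem_filter.2 ⟨hwT, hvw⟩⟩
          rw [hfe, Finset.card_erase_of_mem hwf, Finset.card_erase_of_mem huf]
          rcases hinv v hvT with ⟨k, hk⟩
          have hk2 : 2 ≤ (T.filter (fun x => Relation.ReflTransGen r v x)).card :=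
            Finset.one_lt_card.2 ⟨u, huf, w, (Finset.mem_erase.1 hwf).2, hwu.symm⟩ 
          rcases Nat.even_or_odd ((T.filter (fun x => Relation.ReflTransGen r v x)).card - 1 - 1) with h | h
          · exact h
          · exfalso; rcases h with ⟨m, hm⟩; omega
        · have hvw : ¬ Relation.ReflTransGen r v w := fun h =>
            hvu (h.trans (by haveI : Std.Symm r := ⟨fun a b h => hrsymm h⟩; exact (Relation.ReflTransGen.stdSymm (r := r)).symm _ _ hpathw))
          have hfe : T'.filter (fun x => Relation.ReflTransGen r v x) =
              T.filter (fun x => Relation.ReflTransGen r v x) := by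
            ext x
            simp only [Finset.mem_filter, hmemT' x]
            constructor
            · rintro ⟨⟨_, _, hx⟩, hp⟩; exact ⟨hx, hp⟩
            · rintro ⟨hx, hp⟩
              refine ⟨⟨?_, ?_, hx⟩, hp⟩
              · rintro rfl; exact hvw hp
              · rintro rfl; exact hvu hp
          rw [hfe]; exact hinv v hvT
      obtain ⟨F₂, hF₂S, hF₂deg⟩ := ih (n - 2) (by omega) T' hT'card
        (fun v hv => hTS v ((hmemT' v).1 hv).2.2) hT'inv
      refine ⟨F₁ ∆ F₂, ?_, ?_⟩
      · intro e he x hx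
        rcases Finset.mem_symmDiff.1 he with ⟨h1, _⟩ | ⟨h1, _⟩
        · exact hF₁S e h1 x hx
        · exact hF₂S e h1 x hx
      · intro x
        rw [degIn_symmDiff, hF₁deg, hF₂deg]
        by_cases hxu : x = u
        · have hx1 : x ∉ T' := fun h => ((hmemT' x).1 h).2.1 hxu
          have hx2 : x ≠ w := fun h => hwu (hxu.symm.trans h).symm
          have hxT : x ∈ T := by rw [hxu]; exact hu
          rw [if_pos hxu, if_neg hx2, if_neg hx1, if_pos hxT]
          decide
        · by_cases hxw : x = w
          · have hx1 : x ∉ T' := fun h => ((hmemT' x).1 h).1 hxw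
            have hxT : x ∈ T := by rw [hxw]; exact hwT
            rw [if_neg hxu, if_pos hxw, if_neg hx1, if_pos hxT]
            decide
          · have hx1 : x ∈ T' ↔ x ∈ T := by
              rw [hmemT' x]; tauto
            simp [hxu, hxw, hx1]

end Aux3
section Aux4
open Multigraph

variable {V E : Type} [Fintype V] [Fintype E] (G : Multigraph V E)

lemma eBetween_singleton (R : Finset V) (y : V) :
    G.eBetween R {y} = (Finset.univ.filter
      (fun e : E => ∃ x ∈ R, G.ends e = s(x, y))).card := by
  unfold Multigraph.eBetween
  congr 1
  apply Finset.filter_congr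
  intro e _
  simp

lemma eBetween_sum (R C : Finset V) (h : ∀ x ∈ R, x ∉ C) :
    G.eBetween R C = ∑ y ∈ C, G.eBetween R {y} := by
  classical
  have hdecomp : Finset.univ.filter (fun e : E => ∃ x ∈ R, ∃ y ∈ C, G.ends e = s(x, y)) =
      C.biUnion (fun y => Finset.univ.filter (fun e : E => ∃ x ∈ R, G.ends e = s(x, y))) := by
    ext e
    simp only [Finset.mem_biUnion, Finset.mem_filter, Finset.mem_univ, true_and]
    constructor
    · rintro ⟨x, hx, y, hy, he⟩; exact ⟨y, hy, x, hx, he⟩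
    · rintro ⟨y, hy, x, hx, he⟩; exact ⟨x, hx, y, hy, he⟩
  have hdisj : ∀ y₁ ∈ C, ∀ y₂ ∈ C, y₁ ≠ y₂ →
      Disjoint (Finset.univ.filter (fun e : E => ∃ x ∈ R, G.ends e = s(x, y₁)))
        (Finset.univ.filter (fun e : E => ∃ x ∈ R, G.ends e = s(x, y₂))) := by
    intro y₁ h₁ y₂ h₂ hne
    rw [Finset.disjoint_left]
    rintro e he₁ he₂
    obtain ⟨x₁, hx₁, hex₁⟩ := (Finset.mem_filter.1 he₁).2
    obtain ⟨x₂, hx₂, hex₂⟩ := (Finset.mem_filter.1 he₂).2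
    rw [hex₁] at hex₂
    rcases Sym2.eq_iff.1 hex₂ with ⟨hh1, hh2⟩ | ⟨hh1, hh2⟩
    · exact hne hh2
    · exact h x₁ hx₁ (hh1 ▸ h₂)
  have hcards : (Finset.univ.filter
        (fun e : E => ∃ x ∈ R, ∃ y ∈ C, G.ends e = s(x, y))).card
      = ∑ y ∈ C, (Finset.univ.filter (fun e : E => ∃ x ∈ R, G.ends e = s(x, y))).card := by
    rw [hdecomp]
    exact Finset.card_biUnion hdisj
  calc G.eBetween R C = _ := hcards
    _ = ∑ y ∈ C, G.eBetween R {y} :=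
      Finset.sum_congr rfl (fun y _ => (eBetween_singleton G R y).symm)

lemma filter_even_card_parity (C : Finset V) (f : V → ℕ) :
    (((C.filter (fun y => Even (f y))).card : ZMod 2)) =
      ∑ y ∈ C, (1 + (f y : ZMod 2)) := by
  classical
  rw [Finset.card_filter]
  push_cast
  apply Finset.sum_congr rfl
  intro y _
  by_cases hy : Even (f y)
  · rw [if_pos hy, (ZMod.natCast_eq_zero_iff_even).2 hy, add_zero]
  · rw [if_neg hy, (ZMod.natCast_eq_one_iff_odd).2 (Nat.not_even_iff_odd.1 hy)]
    decide

end Aux4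
section Aux5
open Multigraph

variable {V E : Type} [Fintype V] [Fintype E] (G : Multigraph V E)

lemma rtg_stays {S : Set V} {v x : V} (hv : v ∈ S)
    (h : Relation.ReflTransGen (fun a b => a ∈ S ∧ b ∈ S ∧ (G.simple).Adj a b) v x) :
    x ∈ S := by
  induction h with
  | refl => exact hv
  | tail _ hstep _ => exact hstep.2.1

end Aux5
open Multigraph

theorem stmt10 {V E : Type} [Fintype V] [Fintype E] (G : Multigraph V E)
    (R B : Finset V) (hRB : R ∪ B = G.oddVerts) (hdisj : Disjoint R B)
    (hcomp : ∀ C : Finset V, G.IsComponentOf {v : V | Odd (G.deg v)} C → C ⊆ R ∨ C ⊆ B)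
    (hpar : (∀ Y : Finset V, G.IsComponentOf {v : V | Even (G.deg v)} Y →
      (Odd Y.card → Odd (G.eBetween R Y) ∧ Odd (G.eBetween B Y)) ∧
      (Even Y.card → Even (G.eBetween R Y) ∧ Even (G.eBetween B Y)))) :
    ∃ F : Finset E, G.IsOddSet F ∧ G.IsOddSet Fᶜ := by
  classical
  have hRodd : ∀ v ∈ R, Odd (G.deg v) := by
    intro v hv
    have : v ∈ G.oddVerts := hRB ▸ Finset.mem_union_left B hv
    exact (Finset.mem_filter.1 this).2
  have hBodd : ∀ v ∈ B, Odd (G.deg v) := by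
    intro v hv
    have : v ∈ G.oddVerts := hRB ▸ Finset.mem_union_right R hv
    exact (Finset.mem_filter.1 this).2
  have hoddRB : ∀ v : V, Odd (G.deg v) → v ∈ R ∨ v ∈ B := by
    intro v hv
    have : v ∈ R ∪ B := by
      rw [hRB]; exact Finset.mem_filter.2 ⟨Finset.mem_univ v, hv⟩
    exact Finset.mem_union.1 this
  -- there are no edges between R and B
  have hnoRB : ∀ v ∈ B, ∀ x ∈ R, ∀ e : E, G.ends e ≠ s(x, v) := by
    intro v hvB x hxR e he
    have hvO : Odd (G.deg v) := hBodd v hvB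
    have hxO : Odd (G.deg x) := hRodd x hxR
    have hne : v ≠ x := by
      rintro rfl
      exact (Finset.disjoint_left.1 hdisj) hxR hvB
    have hadj : (G.simple).Adj v x := (⟨hne, e, by rw [he, Sym2.eq_swap]⟩ : v ≠ x ∧ ∃ e : E, G.ends e = s(v, x))
    set C := Finset.univ.filter (fun y => Relation.ReflTransGen
      (fun a b => a ∈ {v : V | Odd (G.deg v)} ∧ b ∈ {v : V | Odd (G.deg v)} ∧
        (G.simple).Adj a b) v y) with hCdef
    have hcompC : G.IsComponentOf {v : V | Odd (G.deg v)} C := by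
      refine ⟨v, hvO, fun y => ?_⟩
      simp [hCdef]
    have hvC : v ∈ C := by
      simp only [hCdef, Finset.mem_filter, Finset.mem_univ, true_and]
      exact Relation.ReflTransGen.refl
    have hxC : x ∈ C := by
      simp only [hCdef, Finset.mem_filter, Finset.mem_univ, true_and]
      exact Relation.ReflTransGen.single ⟨hvO, hxO, hadj⟩
    rcases hcomp C hcompC with hsub | hsub
    · exact (Finset.disjoint_left.1 hdisj) (hsub hvC) hvB
    · exact (Finset.disjoint_left.1 hdisj) hxR (hsub hxC)
  -- the T-join on the even part
  set T : Finset V := Finset.univ.filter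
    (fun v => Even (G.deg v) ∧ Even (G.eBetween R {v})) with hTdef
  have hinv : ∀ v ∈ T, Even ((T.filter (fun x => Relation.ReflTransGen
      (fun a b => a ∈ {v : V | Even (G.deg v)} ∧ b ∈ {v : V | Even (G.deg v)} ∧
        (G.simple).Adj a b) v x)).card) := by
    intro v hv
    obtain ⟨-, hvE, hvEB⟩ := Finset.mem_filter.1 hv
    set C := Finset.univ.filter (fun x => Relation.ReflTransGen
      (fun a b => a ∈ {v : V | Even (G.deg v)} ∧ b ∈ {v : V | Even (G.deg v)} ∧
        (G.simple).Adj a b) v x) with hCdef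
    have hCS : ∀ x ∈ C, Even (G.deg x) := by
      intro x hx
      exact rtg_stays G (hvE : v ∈ {v : V | Even (G.deg v)}) (Finset.mem_filter.1 hx).2
    have hcompC : G.IsComponentOf {v : V | Even (G.deg v)} C := by
      refine ⟨v, hvE, fun x => ?_⟩
      simp [hCdef]
    have hRC : ∀ x ∈ R, x ∉ C := by
      intro x hx hxC
      exact (Nat.not_odd_iff_even.2 (hCS x hxC)) (hRodd x hx)
    have hTfil : T.filter (fun x => Relation.ReflTransGen
        (fun a b => a ∈ {v : V | Even (G.deg v)} ∧ b ∈ {v : V | Even (G.deg v)} ∧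
          (G.simple).Adj a b) v x) = C.filter (fun x => Even (G.eBetween R {x})) := by
      ext x
      simp only [Finset.mem_filter, hTdef, hCdef, Finset.mem_univ, true_and]
      constructor
      · rintro ⟨⟨h1, h2⟩, h3⟩; exact ⟨h3, h2⟩
      · rintro ⟨h1, h2⟩
        refine ⟨⟨?_, h2⟩, h1⟩
        exact rtg_stays G (hvE : v ∈ {v : V | Even (G.deg v)}) h1
    have hcast : (((T.filter (fun x => Relation.ReflTransGen
        (fun a b => a ∈ {v : V | Even (G.deg v)} ∧ b ∈ {v : V | Even (G.deg v)} ∧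
          (G.simple).Adj a b) v x)).card : ZMod 2)) =
        (C.card : ZMod 2) + (G.eBetween R C : ZMod 2) := by
      rw [hTfil, filter_even_card_parity, Finset.sum_add_distrib, Finset.sum_const,
        nsmul_eq_mul, mul_one]
      congr 1
      rw [eBetween_sum G R C hRC, Nat.cast_sum]
    rcases Nat.even_or_odd C.card with hC | hC
    · obtain ⟨h1, -⟩ := (hpar C hcompC).2 hC
      apply (ZMod.natCast_eq_zero_iff_even).1
      rw [hcast, (ZMod.natCast_eq_zero_iff_even).2 hC, (ZMod.natCast_eq_zero_iff_even).2 h1, add_zero]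
    · obtain ⟨h1, -⟩ := (hpar C hcompC).1 hC
      apply (ZMod.natCast_eq_zero_iff_even).1
      rw [hcast, (ZMod.natCast_eq_one_iff_odd).2 hC, (ZMod.natCast_eq_one_iff_odd).2 h1]
      decide
  obtain ⟨Ft, hFtS, hFtdeg⟩ := tjoin G (S := {v : V | Even (G.deg v)}) T.card T rfl
    (fun v hv => (Finset.mem_filter.1 hv).2.1) hinv
  set FR : Finset E := Finset.univ.filter (fun e => ∃ x ∈ R, x ∈ G.ends e) with hFRdef
  have hdisjF : Disjoint FR Ft := by
    rw [Finset.disjoint_left]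
    intro e heR heT
    obtain ⟨x, hxR, hxe⟩ := (Finset.mem_filter.1 heR).2
    exact (Nat.not_odd_iff_even.2 (hFtS e heT x hxe)) (hRodd x hxR)
  have hdegFR_R : ∀ v ∈ R, G.degIn FR v = G.deg v := by
    intro v hv
    have hfil : FR.filter (fun e => v ∈ G.ends e) =
        Finset.univ.filter (fun e => v ∈ G.ends e) := by
      ext e
      simp only [Finset.mem_filter, hFRdef, Finset.mem_univ, true_and]
      constructor
      · rintro ⟨-, h⟩; exact h
      · intro h; exact ⟨⟨v, hv, h⟩, h⟩
    unfold Multigraph.deg Multigraph.degIn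
    rw [hfil]
  have hdegFR_notR : ∀ v, v ∉ R → G.degIn FR v = G.eBetween R {v} := by
    intro v hv
    rw [eBetween_singleton]
    unfold Multigraph.degIn
    congr 1
    ext e
    simp only [Finset.mem_filter, hFRdef, Finset.mem_univ, true_and]
    constructor
    · rintro ⟨⟨x, hxR, hxe⟩, hve⟩
      obtain ⟨z, hz⟩ := Sym2.mem_iff_exists.1 hve
      rw [hz] at hxe
      rcases Sym2.mem_iff.1 hxe with rfl | rfl
      · exact absurd hxR hv
      · exact ⟨x, hxR, by rw [hz]; exact Sym2.eq_swap⟩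
    · rintro ⟨x, hxR, he⟩
      exact ⟨⟨x, hxR, by rw [he]; exact Sym2.mem_mk_left x v⟩,
        by rw [he]; exact Sym2.mem_mk_right x v⟩
  have hdegFt0 : ∀ v, Odd (G.deg v) → G.degIn Ft v = 0 := by
    intro v hv
    unfold Multigraph.degIn
    rw [Finset.card_eq_zero, Finset.filter_eq_empty_iff]
    intro e he hve
    exact (Nat.not_odd_iff_even.2 (hFtS e he v hve)) hv
  have hEB_B : ∀ v ∈ B, G.eBetween R {v} = 0 := by
    intro v hv
    rw [eBetween_singleton, Finset.card_eq_zero, Finset.filter_eq_empty_iff]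
    rintro e - ⟨x, hxR, he⟩
    exact hnoRB v hv x hxR e he
  set F : Finset E := FR ∪ Ft with hFdef
  have hdegF : ∀ v, G.degIn F v = G.degIn FR v + G.degIn Ft v :=
    fun v => degIn_union G FR Ft hdisjF v
  have hpos : ∀ (X : Finset E) (v : V), (∃ e ∈ X, v ∈ G.ends e) → 0 < G.degIn X v := by
    rintro X v ⟨e, he, hve⟩
    exact Finset.card_pos.2 ⟨e, Finset.mem_filter.2 ⟨he, hve⟩⟩
  have hFodd_even : ∀ v, Even (G.deg v) → Odd (G.degIn F v) := by
    intro v hEv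
    have hvR : v ∉ R := fun h => (Nat.not_odd_iff_even.2 hEv) (hRodd v h)
    apply (ZMod.natCast_eq_one_iff_odd).1
    have hstep : ((G.degIn F v : ZMod 2)) =
        (G.eBetween R {v} : ZMod 2) + (G.degIn Ft v : ZMod 2) := by
      rw [hdegF v, Nat.cast_add, hdegFR_notR v hvR]
    rw [hstep, hFtdeg v]
    by_cases hT : v ∈ T
    · have hEB : Even (G.eBetween R {v}) := (Finset.mem_filter.1 hT).2.2
      rw [if_pos hT, (ZMod.natCast_eq_zero_iff_even).2 hEB]
      decide
    · have hEB : ¬ Even (G.eBetween R {v}) := by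
        intro h
        exact hT (Finset.mem_filter.2 ⟨Finset.mem_univ v, hEv, h⟩)
      rw [if_neg hT, (ZMod.natCast_eq_one_iff_odd).2 (Nat.not_even_iff_odd.1 hEB), add_zero]
  refine ⟨F, ?_, ?_⟩
  · intro v hvinc
    rcases Nat.even_or_odd (G.deg v) with hEv | hOd
    · exact hFodd_even v hEv
    · rcases hoddRB v hOd with hvR | hvB
      · rw [hdegF v, hdegFR_R v hvR, hdegFt0 v hOd, add_zero]
        exact hOd
      · exfalso
        have hvR : v ∉ R := Finset.disjoint_right.1 hdisj hvB
        have h0 : G.degIn F v = 0 := by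
          rw [hdegF v, hdegFR_notR v hvR, hEB_B v hvB, hdegFt0 v hOd]
        have := hpos F v hvinc
        omega
  · intro v hvinc
    have hsum := degIn_add_compl G F v
    rcases Nat.even_or_odd (G.deg v) with hEv | hOd
    · apply (ZMod.natCast_eq_one_iff_odd).1
      have hc := congrArg (fun n : ℕ => (n : ZMod 2)) hsum
      simp only [Nat.cast_add] at hc
      rw [(ZMod.natCast_eq_one_iff_odd).2 (hFodd_even v hEv),
        (ZMod.natCast_eq_zero_iff_even).2 hEv] at hc
      have hkey : ∀ a : ZMod 2, 1 + a = 0 → a = 1 := by decide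
      exact hkey _ hc
    · rcases hoddRB v hOd with hvR | hvB
      · exfalso
        have h0 : G.degIn F v = G.deg v := by
          rw [hdegF v, hdegFR_R v hvR, hdegFt0 v hOd, add_zero]
        have := hpos Fᶜ v hvinc
        omega
      · have hvR : v ∉ R := Finset.disjoint_right.1 hdisj hvB
        have h0 : G.degIn F v = 0 := by
          rw [hdegF v, hdegFR_notR v hvR, hEB_B v hvB, hdegFt0 v hOd]
        have h1 : G.degIn Fᶜ v = G.deg v := by omega
        rw [h1]
        exact hOd
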